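/- Let p be a prime, R a commutative ring of characteristic p, and 𝔞 an ideal of R generated by r ≥ 1 elements. Then for every integer e ≥ 1 and every natural number s with s ≥ r·p^e one has 𝔞^s = 𝔞^{[p^e]} · 𝔞^{s−p^e}, where 𝔞^{[p^e]} denotes the ideal generated by {x^{p^e} : x ∈ 𝔞}. -/
import Mathlib


/-- `J^{[q]}`: the ideal generated by `q`-th powers of elements of `J`. -/
def bracketPower {R : Type*} [CommRing R] (J : Ideal R) (q : ℕ) : Ideal R :=
  Ideal.span ((fun x => x ^ q) '' (J : Set R))

theorem pow_eq_bracketPower_mul_pow (p : ℕ) (hp : p.Prime) (R : Type*) [CommRing R] [CharP R p]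
    (r : ℕ) (hr : 1 ≤ r) (f : Fin r → R) (𝔞 : Ideal R)
    (h𝔞 : 𝔞 = Ideal.span (Set.range f))
    (e : ℕ) (he : 1 ≤ e) (s : ℕ) (hs : r * p ^ e ≤ s) :
    𝔞 ^ s = bracketPower 𝔞 (p ^ e) * 𝔞 ^ (s - p ^ e) := by
  classical
  set q := p ^ e with hq
  have hqs : q ≤ s := le_trans (by nlinarith) hs
  have hrange : ∀ i, f i ∈ 𝔞 := fun i => by
    rw [h𝔞]; exact Ideal.subset_span (Set.mem_range_self i)
  apply le_antisymm
  · -- 𝔞^s ≤ bracketPower * 𝔞^(s-q)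
    conv_lhs => rw [h𝔞]
    rw [Ideal.span, Submodule.span_pow, ← Ideal.span]
    rw [Ideal.span_le]
    intro x hx
    rw [Set.mem_pow] at hx
    obtain ⟨g, hgx⟩ := hx
    rw [List.prod_ofFn] at hgx
    -- choose indices
    have hch : ∀ j : Fin s, ∃ i, f i = (g j : R) := fun j => Set.mem_range.mp (g j).2
    choose idx hidx using hch
    haveI : Nonempty (Fin r) := Fin.pos_iff_nonempty.mp hr
    obtain ⟨i, hi⟩ := Fintype.exists_le_card_fiber_of_mul_le_card (f := idx) (n := q)
      (by simpa using hs)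
    obtain ⟨T, hT, hTcard⟩ := Finset.exists_subset_card_eq hi
    have hsplit : (∏ j ∈ T, (g j : R)) * ∏ j ∈ Tᶜ, (g j : R) = x := by
      rw [Finset.prod_mul_prod_compl]; exact hgx
    have h1 : (∏ j ∈ T, (g j : R)) = f i ^ q := by
      rw [Finset.prod_congr rfl (fun j hj => ?_), Finset.prod_const, hTcard]
      have := hT hj
      simp only [Finset.mem_filter] at this
      rw [← hidx j, this.2]
    have hmem1 : (∏ j ∈ T, (g j : R)) ∈ bracketPower 𝔞 q := by
      rw [h1]
      exact Ideal.subset_span ⟨f i, hrange i, rfl⟩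
    have hmem2 : (∏ j ∈ Tᶜ, (g j : R)) ∈ 𝔞 ^ (s - q) := by
      have hcard : Tᶜ.card = s - q := by
        rw [Finset.card_compl, hTcard, Fintype.card_fin]
      have : (∏ j ∈ Tᶜ, 𝔞) = 𝔞 ^ (s - q) := by
        rw [Finset.prod_const, hcard]
      rw [← this]
      exact Ideal.prod_mem_prod fun j _ => by rw [← hidx j]; exact hrange _
    rw [← hsplit]
    exact Ideal.mul_mem_mul hmem1 hmem2
  · -- converse
    have hb : bracketPower 𝔞 q ≤ 𝔞 ^ q := by
      rw [bracketPower, Ideal.span_le]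
      rintro _ ⟨y, hy, rfl⟩
      exact Ideal.pow_mem_pow hy q
    calc bracketPower 𝔞 q * 𝔞 ^ (s - q) ≤ 𝔞 ^ q * 𝔞 ^ (s - q) :=
          Ideal.mul_mono hb le_rfl
      _ = 𝔞 ^ s := by rw [← pow_add, Nat.add_sub_cancel' hqs]
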